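/- Let E1 be a two-dimensional vector space over ℂ and let E2 ⊂ E1 ⊗ E1, E3 ⊂ E1 ⊗ E1 ⊗ E1 be two-dimensional subspaces with E3 ⊂ (E2 ⊗ E1) ∩ (E1 ⊗ E2). If rank E2 = 0 (equivalently, every vector of E2 is a product vector), then there exists a non-zero x ∈ E1 such that either E3 = E1 ⊗ x ⊗ x = {v ⊗ x ⊗ x : v ∈ E1} or E3 = x ⊗ x ⊗ E1 = {x ⊗ x ⊗ v : v ∈ E1}. -/

import Mathlib

open TensorProduct

/-- The rank of the restriction of a quadratic form `q` on `M` to a submodule `L`,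
defined as the rank of the polar (bilinear) form of the restriction. -/
noncomputable def quadRankOn {M : Type*} [AddCommGroup M] [Module ℂ M]
    (q : QuadraticForm ℂ M) (L : Submodule ℂ M) : ℕ :=
  Module.finrank ℂ (LinearMap.range (QuadraticMap.polarBilin (q.comp L.subtype)))

/-- The subspace `L12 ⊗ L3` of `(L1 ⊗ L2) ⊗ L3`. -/
noncomputable def leftTensorSub {L1 L2 L3 : Type*} [AddCommGroup L1] [Module ℂ L1]
    [AddCommGroup L2] [Module ℂ L2] [AddCommGroup L3] [Module ℂ L3]
    (L12 : Submodule ℂ (L1 ⊗[ℂ] L2)) : Submodule ℂ ((L1 ⊗[ℂ] L2) ⊗[ℂ] L3) :=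
  LinearMap.range (TensorProduct.mapIncl L12 (⊤ : Submodule ℂ L3))

/-- The subspace `L1 ⊗ L23` of `(L1 ⊗ L2) ⊗ L3`, transported along the associator. -/
noncomputable def rightTensorSub {L1 L2 L3 : Type*} [AddCommGroup L1] [Module ℂ L1]
    [AddCommGroup L2] [Module ℂ L2] [AddCommGroup L3] [Module ℂ L3]
    (L23 : Submodule ℂ (L2 ⊗[ℂ] L3)) : Submodule ℂ ((L1 ⊗[ℂ] L2) ⊗[ℂ] L3) :=
  Submodule.map (TensorProduct.assoc ℂ L1 L2 L3).symm.toLinearMap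
    (LinearMap.range (TensorProduct.mapIncl (⊤ : Submodule ℂ L1) L23))

section AuxStmt9

variable {E1 : Type*} [AddCommGroup E1] [Module ℂ E1]

/-- contract the right tensor factor with a functional -/
noncomputable def rc (V : Type*) [AddCommGroup V] [Module ℂ V]
    (f : E1 →ₗ[ℂ] ℂ) : V ⊗[ℂ] E1 →ₗ[ℂ] V :=
  (TensorProduct.rid ℂ V).toLinearMap ∘ₗ LinearMap.lTensor V f

@[simp] lemma rc_tmul {V : Type*} [AddCommGroup V] [Module ℂ V]
    (f : E1 →ₗ[ℂ] ℂ) (v : V) (w : E1) : rc V f (v ⊗ₜ[ℂ] w) = f w • v := by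
  simp [rc, TensorProduct.smul_tmul']

/-- contract the left tensor factor with a functional -/
noncomputable def lc (V : Type*) [AddCommGroup V] [Module ℂ V]
    (f : E1 →ₗ[ℂ] ℂ) : E1 ⊗[ℂ] V →ₗ[ℂ] V :=
  (TensorProduct.lid ℂ V).toLinearMap ∘ₗ LinearMap.rTensor V f

@[simp] lemma lc_tmul {V : Type*} [AddCommGroup V] [Module ℂ V]
    (f : E1 →ₗ[ℂ] ℂ) (v : V) (w : E1) : lc V f (w ⊗ₜ[ℂ] v) = f w • v := by
  simp [lc]

lemma inj_flip_mk (V : Type*) [AddCommGroup V] [Module ℂ V]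
    {f : E1 →ₗ[ℂ] ℂ} {x : E1} (hfx : f x = 1) :
    Function.Injective ((TensorProduct.mk ℂ V E1).flip x) := by
  have h : ∀ v : V, rc V f (((TensorProduct.mk ℂ V E1).flip x) v) = v := by
    intro v; simp [TensorProduct.mk_apply, hfx]
  exact Function.LeftInverse.injective h

lemma inj_mk (V : Type*) [AddCommGroup V] [Module ℂ V]
    {f : E1 →ₗ[ℂ] ℂ} {x : E1} (hfx : f x = 1) :
    Function.Injective (TensorProduct.mk ℂ E1 V x) := by
  have h : ∀ v : V, lc V f ((TensorProduct.mk ℂ E1 V x) v) = v := by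
    intro v; simp [TensorProduct.mk_apply, hfx]
  exact Function.LeftInverse.injective h

lemma aux_exists_basis (h1 : Module.finrank ℂ E1 = 2) {x : E1} (hx : x ≠ 0) :
    ∃ B : Module.Basis (Fin 2) ℂ E1, B 0 = x := by
  have hfd : FiniteDimensional ℂ E1 := Module.finite_of_finrank_pos (by rw [h1]; norm_num)
  have hlt : Module.finrank ℂ (Submodule.span ℂ {x}) < Module.finrank ℂ E1 := by
    rw [finrank_span_singleton hx, h1]; norm_num
  obtain ⟨y, hy⟩ := Submodule.exists_of_finrank_lt _ hlt
  have hy' : y ∉ Submodule.span ℂ {x} := by simpa using hy 1 one_ne_zero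
  have hli : LinearIndependent ℂ ![x, y] := by
    rw [LinearIndependent.pair_iff]
    intro s t hst
    have ht : t = 0 := by
      by_contra ht
      apply hy'
      have hty : t • y = (-s) • x := by
        linear_combination (norm := module) hst
      have : y = (t⁻¹ * -s) • x := by
        rw [mul_smul, ← hty, smul_smul, inv_mul_cancel₀ ht, one_smul]
      rw [this]
      exact Submodule.smul_mem _ _ (Submodule.mem_span_singleton_self x)
    refine ⟨?_, ht⟩
    rw [ht, zero_smul, add_zero, smul_eq_zero] at hst
    exact hst.resolve_right hx
  refine ⟨basisOfLinearIndependentOfCardEqFinrank hli (by simp [h1]), ?_⟩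
  rw [coe_basisOfLinearIndependentOfCardEqFinrank]
  rfl

/-- kernel of right contraction by `ψ` vanishing at `x` is `E1 ⊗ x` -/
lemma ker_rc_eq (h1 : Module.finrank ℂ E1 = 2) {x y : E1}
    {f ψ : E1 →ₗ[ℂ] ℂ} (hfx : f x = 1) (hψx : ψ x = 0) (hψy : ψ y = 1) :
    LinearMap.ker (rc E1 ψ) = LinearMap.range ((TensorProduct.mk ℂ E1 E1).flip x) := by
  have hfd : FiniteDimensional ℂ E1 := Module.finite_of_finrank_pos (by rw [h1]; norm_num)
  have hle : LinearMap.range ((TensorProduct.mk ℂ E1 E1).flip x) ≤ LinearMap.ker (rc E1 ψ) := by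
    rintro _ ⟨v, rfl⟩
    simp [TensorProduct.mk_apply, hψx]
  symm
  apply Submodule.eq_of_le_of_finrank_eq hle
  have h4 : Module.finrank ℂ (E1 ⊗[ℂ] E1) = 4 := by
    rw [Module.finrank_tensorProduct, h1]
  have hsurj : LinearMap.range (rc E1 ψ) = ⊤ := by
    rw [LinearMap.range_eq_top]
    intro a
    exact ⟨a ⊗ₜ[ℂ] y, by simp [hψy]⟩
  have hker : Module.finrank ℂ (LinearMap.ker (rc E1 ψ)) = 2 := by
    have := LinearMap.finrank_range_add_finrank_ker (rc E1 ψ)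
    rw [hsurj, h4, finrank_top, h1] at this
    omega
  rw [LinearMap.finrank_range_of_inj (inj_flip_mk E1 hfx), h1, hker]

lemma ker_lc_eq (h1 : Module.finrank ℂ E1 = 2) {x y : E1}
    {f ψ : E1 →ₗ[ℂ] ℂ} (hfx : f x = 1) (hψx : ψ x = 0) (hψy : ψ y = 1) :
    LinearMap.ker (lc E1 ψ) = LinearMap.range (TensorProduct.mk ℂ E1 E1 x) := by
  have hfd : FiniteDimensional ℂ E1 := Module.finite_of_finrank_pos (by rw [h1]; norm_num)
  have hle : LinearMap.range (TensorProduct.mk ℂ E1 E1 x) ≤ LinearMap.ker (lc E1 ψ) := by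
    rintro _ ⟨v, rfl⟩
    simp [TensorProduct.mk_apply, hψx]
  symm
  apply Submodule.eq_of_le_of_finrank_eq hle
  have h4 : Module.finrank ℂ (E1 ⊗[ℂ] E1) = 4 := by
    rw [Module.finrank_tensorProduct, h1]
  have hsurj : LinearMap.range (lc E1 ψ) = ⊤ := by
    rw [LinearMap.range_eq_top]
    intro a
    exact ⟨y ⊗ₜ[ℂ] a, by simp [hψy]⟩
  have hker : Module.finrank ℂ (LinearMap.ker (lc E1 ψ)) = 2 := by
    have := LinearMap.finrank_range_add_finrank_ker (lc E1 ψ)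
    rw [hsurj, h4, finrank_top, h1] at this
    omega
  rw [LinearMap.finrank_range_of_inj (inj_mk E1 hfx), h1, hker]

lemma caseL (h1 : Module.finrank ℂ E1 = 2) {x : E1} (hx : x ≠ 0)
    (E2 : Submodule ℂ (E1 ⊗[ℂ] E1)) (E3 : Submodule ℂ ((E1 ⊗[ℂ] E1) ⊗[ℂ] E1))
    (h3 : Module.finrank ℂ E3 = 2)
    (hsub : E3 ≤ leftTensorSub (L3 := E1) E2 ⊓ rightTensorSub (L1 := E1) E2)
    (hE2 : E2 = LinearMap.range ((TensorProduct.mk ℂ E1 E1).flip x)) :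
    E3 = LinearMap.range (((TensorProduct.mk ℂ (E1 ⊗[ℂ] E1) E1).flip x).comp
              ((TensorProduct.mk ℂ E1 E1).flip x)) := by
  have hfd : FiniteDimensional ℂ E1 := Module.finite_of_finrank_pos (by rw [h1]; norm_num)
  obtain ⟨B, hB0⟩ := aux_exists_basis h1 hx
  set f := B.coord 0 with hf
  set ψ := B.coord 1 with hψ
  have hfx : f x = 1 := by rw [← hB0]; simp [hf]
  have hψx : ψ x = 0 := by rw [← hB0]; simp [hψ]
  have hψy : ψ (B 1) = 1 := by simp [hψ]
  apply Submodule.eq_of_le_of_finrank_eq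
  · intro z hz
    obtain ⟨hzl, hzr⟩ := hsub hz
    -- from the right membership: z = s ⊗ x for some s
    obtain ⟨u, hu, hzu⟩ := hzr
    have hright : LinearMap.range (TensorProduct.mapIncl (⊤ : Submodule ℂ E1) E2)
        ≤ LinearMap.range (LinearMap.lTensor E1 ((TensorProduct.mk ℂ E1 E1).flip x)) := by
      rw [TensorProduct.mapIncl, TensorProduct.range_map_eq_span_tmul, Submodule.span_le]
      rintro _ ⟨m, n, rfl⟩
      obtain ⟨v, hv⟩ : (n : E1 ⊗[ℂ] E1) ∈ LinearMap.range ((TensorProduct.mk ℂ E1 E1).flip x) :=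
        hE2 ▸ n.2
      exact ⟨(m : E1) ⊗ₜ[ℂ] v, by simp [LinearMap.lTensor_tmul, hv]⟩
    obtain ⟨s, rfl⟩ := hright hu
    have hcomp : (TensorProduct.assoc ℂ E1 E1 E1).symm.toLinearMap ∘ₗ
        LinearMap.lTensor E1 ((TensorProduct.mk ℂ E1 E1).flip x)
        = (TensorProduct.mk ℂ (E1 ⊗[ℂ] E1) E1).flip x := by
      apply TensorProduct.ext'
      intro a v
      simp [TensorProduct.assoc_symm_tmul]
    have hz' : z = s ⊗ₜ[ℂ] x := by
      rw [← hzu]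
      exact (LinearMap.congr_fun hcomp s)
    -- from the left membership: contraction by ψ in middle slot kills z
    have hleft : leftTensorSub (L3 := E1) E2 ≤
        LinearMap.ker (LinearMap.rTensor E1 (rc E1 ψ)) := by
      rw [leftTensorSub, TensorProduct.mapIncl, TensorProduct.range_map_eq_span_tmul,
        Submodule.span_le]
      rintro _ ⟨m, n, rfl⟩
      obtain ⟨v, hv⟩ : (m : E1 ⊗[ℂ] E1) ∈ LinearMap.range ((TensorProduct.mk ℂ E1 E1).flip x) :=
        hE2 ▸ m.2
      simp only [SetLike.mem_coe, LinearMap.mem_ker, LinearMap.rTensor_tmul,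
        Submodule.subtype_apply]
      rw [← hv]
      simp [hψx]
    have h0 : (rc E1 ψ s) ⊗ₜ[ℂ] x = 0 := by
      have := hleft hzl
      rw [hz'] at this
      simpa using this
    have hs0 : rc E1 ψ s = 0 := by
      have := congrArg (rc E1 f) h0
      simpa [hfx] using this
    have hks : s ∈ LinearMap.ker (rc E1 ψ) := hs0
    rw [ker_rc_eq h1 hfx hψx hψy] at hks
    obtain ⟨v, hv⟩ := hks
    refine ⟨v, ?_⟩
    rw [hz', ← hv]
    rfl
  · rw [h3, LinearMap.finrank_range_of_inj, h1]
    rw [LinearMap.coe_comp]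
    exact Function.Injective.comp (inj_flip_mk (E1 ⊗[ℂ] E1) hfx) (inj_flip_mk E1 hfx)

lemma caseR (h1 : Module.finrank ℂ E1 = 2) {x : E1} (hx : x ≠ 0)
    (E2 : Submodule ℂ (E1 ⊗[ℂ] E1)) (E3 : Submodule ℂ ((E1 ⊗[ℂ] E1) ⊗[ℂ] E1))
    (h3 : Module.finrank ℂ E3 = 2)
    (hsub : E3 ≤ leftTensorSub (L3 := E1) E2 ⊓ rightTensorSub (L1 := E1) E2)
    (hE2 : E2 = LinearMap.range (TensorProduct.mk ℂ E1 E1 x)) :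
    E3 = LinearMap.range (TensorProduct.mk ℂ (E1 ⊗[ℂ] E1) E1 (x ⊗ₜ[ℂ] x)) := by
  have hfd : FiniteDimensional ℂ E1 := Module.finite_of_finrank_pos (by rw [h1]; norm_num)
  obtain ⟨B, hB0⟩ := aux_exists_basis h1 hx
  set f := B.coord 0 with hf
  set ψ := B.coord 1 with hψ
  have hfx : f x = 1 := by rw [← hB0]; simp [hf]
  have hψx : ψ x = 0 := by rw [← hB0]; simp [hψ]
  have hψy : ψ (B 1) = 1 := by simp [hψ]
  apply Submodule.eq_of_le_of_finrank_eq
  · intro z hz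
    obtain ⟨hzl, hzr⟩ := hsub hz
    -- from the left membership: assoc z = x ⊗ t for some t
    have hleft : leftTensorSub (L3 := E1) E2 ≤
        LinearMap.range (LinearMap.rTensor E1 (TensorProduct.mk ℂ E1 E1 x)) := by
      rw [leftTensorSub, TensorProduct.mapIncl, TensorProduct.range_map_eq_span_tmul,
        Submodule.span_le]
      rintro _ ⟨m, n, rfl⟩
      obtain ⟨v, hv⟩ : (m : E1 ⊗[ℂ] E1) ∈ LinearMap.range (TensorProduct.mk ℂ E1 E1 x) :=
        hE2 ▸ m.2
      exact ⟨v ⊗ₜ[ℂ] (n : E1), by simp [LinearMap.rTensor_tmul, hv]⟩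
    obtain ⟨t, ht⟩ := hleft hzl
    have hcomp : (TensorProduct.assoc ℂ E1 E1 E1).toLinearMap ∘ₗ
        LinearMap.rTensor E1 (TensorProduct.mk ℂ E1 E1 x)
        = TensorProduct.mk ℂ E1 (E1 ⊗[ℂ] E1) x := by
      apply TensorProduct.ext'
      intro a v
      simp [TensorProduct.assoc_tmul]
    have hassoc : (TensorProduct.assoc ℂ E1 E1 E1) z = x ⊗ₜ[ℂ] t := by
      rw [← ht]
      exact LinearMap.congr_fun hcomp t
    -- from the right membership: contraction by ψ in middle slot kills assoc z
    obtain ⟨u, hu, hzu⟩ := hzr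
    have hu' : (TensorProduct.assoc ℂ E1 E1 E1) z = u := by
      rw [← hzu]; simp
    have hright : LinearMap.range (TensorProduct.mapIncl (⊤ : Submodule ℂ E1) E2)
        ≤ LinearMap.ker (LinearMap.lTensor E1 (lc E1 ψ)) := by
      rw [TensorProduct.mapIncl, TensorProduct.range_map_eq_span_tmul, Submodule.span_le]
      rintro _ ⟨m, n, rfl⟩
      obtain ⟨v, hv⟩ : (n : E1 ⊗[ℂ] E1) ∈ LinearMap.range (TensorProduct.mk ℂ E1 E1 x) :=
        hE2 ▸ n.2
      simp only [SetLike.mem_coe, LinearMap.mem_ker, LinearMap.lTensor_tmul,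
        Submodule.subtype_apply]
      rw [← hv]
      simp [hψx]
    have h0 : x ⊗ₜ[ℂ] (lc E1 ψ t) = 0 := by
      have := hright hu
      rw [← hu', hassoc] at this
      simpa using this
    have ht0 : lc E1 ψ t = 0 := by
      have := congrArg (lc E1 f) h0
      simpa [hfx] using this
    have hkt : t ∈ LinearMap.ker (lc E1 ψ) := ht0
    rw [ker_lc_eq h1 hfx hψx hψy] at hkt
    obtain ⟨w, hw⟩ := hkt
    have hw' : x ⊗ₜ[ℂ] w = t := hw
    refine ⟨w, ?_⟩
    have : z = (TensorProduct.assoc ℂ E1 E1 E1).symm (x ⊗ₜ[ℂ] (x ⊗ₜ[ℂ] w)) := by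
      rw [← hw'] at hassoc
      rw [← hassoc]
      simp
    rw [this]
    simp [TensorProduct.assoc_symm_tmul]
  · have hFxx : (f ∘ₗ rc E1 f) (x ⊗ₜ[ℂ] x) = 1 := by simp [hfx]
    rw [h3, LinearMap.finrank_range_of_inj (inj_mk (E1 := E1 ⊗[ℂ] E1) E1 hFxx), h1]

end AuxStmt9

theorem stmt_9 {E1 : Type*} [AddCommGroup E1] [Module ℂ E1]
    (h1 : Module.finrank ℂ E1 = 2)
    (E2 : Submodule ℂ (E1 ⊗[ℂ] E1)) (E3 : Submodule ℂ ((E1 ⊗[ℂ] E1) ⊗[ℂ] E1))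
    (h2 : Module.finrank ℂ E2 = 2) (h3 : Module.finrank ℂ E3 = 2)
    (hsub : E3 ≤ leftTensorSub (L3 := E1) E2 ⊓ rightTensorSub (L1 := E1) E2)
    (q : QuadraticForm ℂ (E1 ⊗[ℂ] E1))
    (hq : ∀ v : E1 ⊗[ℂ] E1, q v = 0 ↔ ∃ x y : E1, v = x ⊗ₜ[ℂ] y)
    (hrank : quadRankOn q E2 = 0) :
    ∃ x : E1, x ≠ 0 ∧
      (E3 = LinearMap.range (((TensorProduct.mk ℂ (E1 ⊗[ℂ] E1) E1).flip x).comp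
              ((TensorProduct.mk ℂ E1 E1).flip x)) ∨
       E3 = LinearMap.range (TensorProduct.mk ℂ (E1 ⊗[ℂ] E1) E1 (x ⊗ₜ[ℂ] x))) := by
  have hfd1 : FiniteDimensional ℂ E1 := Module.finite_of_finrank_pos (by rw [h1]; norm_num)
  -- Step 1: every vector of E2 is a product vector
  have hq0 : ∀ v ∈ E2, ∃ a b : E1, v = a ⊗ₜ[ℂ] b := by
    intro v hv
    apply (hq v).mp
    have hbot : LinearMap.range (QuadraticMap.polarBilin (q.comp E2.subtype)) = ⊥ :=
      Submodule.finrank_eq_zero.mp hrank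
    have hpol : QuadraticMap.polarBilin (q.comp E2.subtype) (⟨v, hv⟩ : E2) = 0 := by
      have hm : QuadraticMap.polarBilin (q.comp E2.subtype) (⟨v, hv⟩ : E2) ∈
          LinearMap.range (QuadraticMap.polarBilin (q.comp E2.subtype)) :=
        LinearMap.mem_range_self _ _
      rw [hbot] at hm
      simpa using hm
    have h2q : QuadraticMap.polar (⇑(q.comp E2.subtype)) ⟨v, hv⟩ ⟨v, hv⟩ = 0 := by
      rw [← QuadraticMap.polarBilin_apply_apply, hpol]
      rfl
    rw [QuadraticMap.polar_self] at h2q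
    have : (q.comp E2.subtype) (⟨v, hv⟩ : E2) = 0 := by
      have h2 : (2 : ℕ) • (q.comp E2.subtype) (⟨v, hv⟩ : E2) = 0 := h2q
      rw [nsmul_eq_mul] at h2
      simpa using h2
    rw [QuadraticMap.comp_apply] at this
    exact this
  -- Step 2: pick a basis of E2
  have hfdE2 : FiniteDimensional ℂ E2 := inferInstance
  let BE2 : Module.Basis (Fin 2) ℂ E2 := Module.finBasisOfFinrankEq ℂ E2 h2
  set v : E1 ⊗[ℂ] E1 := (BE2 0 : E1 ⊗[ℂ] E1) with hv0
  set w : E1 ⊗[ℂ] E1 := (BE2 1 : E1 ⊗[ℂ] E1) with hw0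
  have hvE2 : v ∈ E2 := (BE2 0).2
  have hwE2 : w ∈ E2 := (BE2 1).2
  have hli : LinearIndependent ℂ ![v, w] := by
    have h := BE2.linearIndependent.map' E2.subtype (Submodule.ker_subtype E2)
    have he : (⇑E2.subtype ∘ ⇑BE2) = ![v, w] := by
      funext i; fin_cases i <;> rfl
    rwa [he] at h
  have hE2span : E2 = Submodule.span ℂ (Set.range ![v, w]) := by
    symm
    apply Submodule.eq_of_le_of_finrank_eq
    · rw [Submodule.span_le]
      rintro _ ⟨i, rfl⟩
      fin_cases i
      · exact hvE2
      · exact hwE2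
    · rw [finrank_span_eq_card hli, h2]
      simp
  obtain ⟨a, b, hvab⟩ := hq0 v hvE2
  obtain ⟨c, d, hwcd⟩ := hq0 w hwE2
  have hvne : v ≠ 0 := by have := hli.ne_zero 0; simpa using this
  have hwne : w ≠ 0 := by have := hli.ne_zero 1; simpa using this
  have ha : a ≠ 0 := by rintro rfl; exact hvne (by rw [hvab, TensorProduct.zero_tmul])
  have hb : b ≠ 0 := by rintro rfl; exact hvne (by rw [hvab, TensorProduct.tmul_zero])
  have hc : c ≠ 0 := by rintro rfl; exact hwne (by rw [hwcd, TensorProduct.zero_tmul])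
  by_cases hdep : ∃ μ : ℂ, c = μ • a
  · -- E2 = a ⊗ E1
    obtain ⟨μ, rfl⟩ := hdep
    have hE2r : E2 = LinearMap.range (TensorProduct.mk ℂ E1 E1 a) := by
      apply Submodule.eq_of_le_of_finrank_eq
      · rw [hE2span, Submodule.span_le]
        rintro _ ⟨i, rfl⟩
        fin_cases i
        · exact ⟨b, hvab.symm⟩
        · refine ⟨μ • d, ?_⟩
          rw [hwcd]
          simp [TensorProduct.mk_apply, TensorProduct.tmul_smul, TensorProduct.smul_tmul']
      · obtain ⟨Ba, hBa0⟩ := aux_exists_basis h1 ha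
        have hfa : Ba.coord 0 a = 1 := by rw [← hBa0]; simp
        rw [h2, LinearMap.finrank_range_of_inj (inj_mk E1 hfa), h1]
    exact ⟨a, ha, Or.inr (caseR h1 ha E2 E3 h3 hsub hE2r)⟩
  · -- a, c independent; show d is a multiple of b, so E2 = E1 ⊗ b
    have hliac : LinearIndependent ℂ ![a, c] := by
      rw [LinearIndependent.pair_iff]
      intro s t hst
      have ht : t = 0 := by
        by_contra ht
        have hty : t • c = (-s) • a := by
          linear_combination (norm := module) hst
        exact hdep ⟨t⁻¹ * -s, by
          rw [mul_smul, ← hty, smul_smul, inv_mul_cancel₀ ht, one_smul]⟩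
      refine ⟨?_, ht⟩
      rw [ht, zero_smul, add_zero, smul_eq_zero] at hst
      exact hst.resolve_right ha
    let Bac := basisOfLinearIndependentOfCardEqFinrank hliac (by simp [h1])
    have hBac0 : Bac 0 = a := by
      show (⇑Bac) 0 = a
      rw [coe_basisOfLinearIndependentOfCardEqFinrank]; rfl
    have hBac1 : Bac 1 = c := by
      show (⇑Bac) 1 = c
      rw [coe_basisOfLinearIndependentOfCardEqFinrank]; rfl
    have hφaa : Bac.coord 0 a = 1 := by rw [← hBac0]; simp
    have hφac : Bac.coord 0 c = 0 := by rw [← hBac1]; simp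
    have hφca : Bac.coord 1 a = 0 := by rw [← hBac0]; simp
    have hφcc : Bac.coord 1 c = 1 := by rw [← hBac1]; simp
    obtain ⟨p, r, hpr⟩ := hq0 (v + w) (E2.add_mem hvE2 hwE2)
    have hbr : b = Bac.coord 0 p • r := by
      have hcongr := congrArg (lc E1 (Bac.coord 0)) hpr
      rw [hvab, hwcd] at hcongr
      simpa [hφaa, hφac] using hcongr
    have hdr : d = Bac.coord 1 p • r := by
      have hcongr := congrArg (lc E1 (Bac.coord 1)) hpr
      rw [hvab, hwcd] at hcongr
      simpa [hφca, hφcc] using hcongr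
    have hs : Bac.coord 0 p ≠ 0 := by
      intro h
      exact hb (by rw [hbr, h, zero_smul])
    have hdb : d = (Bac.coord 1 p * (Bac.coord 0 p)⁻¹) • b := by
      rw [hdr, hbr, smul_smul, mul_assoc, inv_mul_cancel₀ hs, mul_one]
    have hE2l : E2 = LinearMap.range ((TensorProduct.mk ℂ E1 E1).flip b) := by
      apply Submodule.eq_of_le_of_finrank_eq
      · rw [hE2span, Submodule.span_le]
        rintro _ ⟨i, rfl⟩
        fin_cases i
        · exact ⟨a, hvab.symm⟩
        · refine ⟨(Bac.coord 1 p * (Bac.coord 0 p)⁻¹) • c, ?_⟩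
          rw [hwcd, hdb]
          simp [TensorProduct.mk_apply, TensorProduct.tmul_smul, TensorProduct.smul_tmul']
      · obtain ⟨Bb, hBb0⟩ := aux_exists_basis h1 hb
        have hfb : Bb.coord 0 b = 1 := by rw [← hBb0]; simp
        rw [h2, LinearMap.finrank_range_of_inj (inj_flip_mk E1 hfb), h1]
    exact ⟨b, hb, Or.inl (caseL h1 hb E2 E3 h3 hsub hE2l)⟩
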